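/- (Gerl-type inequality) For a reversible stochastic kernel p with weight σ, every r ≥ 2, and every finitely supported nonnegative function f : I → ℝ, one has ‖f^r‖_{D(1)} ≤ 2r·‖f‖_{r,σ}^{r−1}·‖f‖_{D(r)}, where ‖g‖_{D(s)} = ((1/2)·Σ_{ξ,η} σ(ξ)·p(ξ,η)·|g(ξ)−g(η)|^s)^{1/s} and ‖f‖_{r,σ} = (Σ_ξ σ(ξ)·f(ξ)^r)^{1/r}. -/

import Mathlib

open Real Finset
open scoped NNReal

lemma gerl_add_rpow_le (x y : ℝ) (hx : 0 ≤ x) (hy : 0 ≤ y) {p : ℝ} (hp : 1 ≤ p) :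
    (x + y) ^ p ≤ 2 ^ (p - 1) * (x ^ p + y ^ p) := by
  lift x to ℝ≥0 using hx
  lift y to ℝ≥0 using hy
  have := NNReal.rpow_add_le_mul_rpow_add_rpow x y hp
  calc ((x : ℝ) + y) ^ p = (((x + y : ℝ≥0) : ℝ)) ^ p := by push_cast; ring_nf
    _ = (((x + y) ^ p : ℝ≥0) : ℝ) := by rw [NNReal.coe_rpow]
    _ ≤ ((2 ^ (p - 1) * (x ^ p + y ^ p) : ℝ≥0) : ℝ) := by exact_mod_cast this
    _ = 2 ^ (p - 1) * ((x : ℝ) ^ p + (y : ℝ) ^ p) := by push_cast; ring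

lemma gerl_rpow_diff (r : ℝ) (hr : 1 ≤ r) : ∀ a b : ℝ, 0 ≤ a → 0 ≤ b →
    |a ^ r - b ^ r| ≤ r * (a ^ (r - 1) + b ^ (r - 1)) * |a - b| := by
  have key : ∀ a b : ℝ, 0 ≤ a → 0 ≤ b → b ≤ a →
      |a ^ r - b ^ r| ≤ r * (a ^ (r - 1) + b ^ (r - 1)) * |a - b| := by
    intro a b ha hb hba
    have hab : a ^ r - b ^ r ≤ r * a ^ (r - 1) * (a - b) := by
      rcases eq_or_lt_of_le ha with h0 | ha'
      · have hb0 : b = 0 := le_antisymm (hba.trans h0.symm.le) hb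
        simp [← h0, hb0]
      · have hs : -1 ≤ b / a - 1 := by
          have : 0 ≤ b / a := div_nonneg hb ha
          linarith
        have hB := one_add_mul_self_le_rpow_one_add hs hr
        rw [add_sub_cancel] at hB
        have hdiv : (b / a) ^ r = b ^ r / a ^ r := Real.div_rpow hb ha r
        rw [hdiv] at hB
        have har : 0 < a ^ r := Real.rpow_pos_of_pos ha' r
        have hmul := mul_le_mul_of_nonneg_right hB har.le
        rw [div_mul_cancel₀ _ har.ne'] at hmul
        have ha1 : a ^ r = a ^ (r - 1) * a := by
          rw [← Real.rpow_add_one ha'.ne' (r - 1), sub_add_cancel]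
        have hmul' : a ^ r + r * (b - a) * a ^ (r - 1) ≤ b ^ r := by
          calc a ^ r + r * (b - a) * a ^ (r - 1)
              = (1 + r * (b / a - 1)) * a ^ r := by
                rw [ha1]; field_simp
            _ ≤ b ^ r := hmul
        linarith
    have h1 : b ^ r ≤ a ^ r := Real.rpow_le_rpow hb hba (by linarith)
    have h2 : 0 ≤ b ^ (r - 1) := Real.rpow_nonneg hb _
    have h3 : 0 ≤ a ^ (r - 1) := Real.rpow_nonneg ha _
    rw [abs_of_nonneg (by linarith : (0:ℝ) ≤ a ^ r - b ^ r),
        abs_of_nonneg (by linarith : (0:ℝ) ≤ a - b)]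
    have h4 : (0:ℝ) ≤ a - b := by linarith
    have h5 : (0:ℝ) ≤ r := by linarith
    nlinarith [mul_nonneg (mul_nonneg h5 h2) h4]
  intro a b ha hb
  rcases le_total b a with h | h
  · exact key a b ha hb h
  · rw [abs_sub_comm, abs_sub_comm a b, add_comm]
    exact key b a hb ha h

/-- Gerl-type inequality: `‖f^r‖_{D(1)} ≤ 2r·‖f‖_{r,σ}^{r−1}·‖f‖_{D(r)}` for a reversible
stochastic kernel, `r ≥ 2`, and finitely supported nonnegative `f`. -/
theorem gerl_inequality {I : Type*} [Countable I] (σ : I → ℝ) (p : I → I → ℝ)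
    (hσ : ∀ ξ, 0 < σ ξ) (hp : ∀ ξ η, 0 ≤ p ξ η)
    (hrow : ∀ ξ, (Function.support (p ξ)).Finite)
    (hstoch : ∀ ξ, ∑' η, p ξ η = 1)
    (hrev : ∀ ξ η, σ ξ * p ξ η = σ η * p η ξ)
    (f : I → ℝ) (hf0 : ∀ ξ, 0 ≤ f ξ) (hf : (Function.support f).Finite)
    (r : ℝ) (hr : 2 ≤ r) :
    ((1 : ℝ) / 2) * ∑' ξ, ∑' η, σ ξ * p ξ η * |f ξ ^ r - f η ^ r|
      ≤ 2 * r * (∑' ξ, σ ξ * f ξ ^ r) ^ ((r - 1) / r)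
          * (((1 : ℝ) / 2) * ∑' ξ, ∑' η, σ ξ * p ξ η * |f ξ - f η| ^ r) ^ (1 / r) := by
  classical
  have hr0 : (0:ℝ) < r := by linarith
  have hr1 : (1:ℝ) < r := by linarith
  have hrne : r ≠ 0 := ne_of_gt hr0
  have hr1' : (0:ℝ) < r - 1 := by linarith
  set F : Finset I := hf.toFinset with hF
  set E : Finset I := F ∪ F.biUnion (fun a => (hrow a).toFinset) with hE
  have hmemF : ∀ ξ, f ξ ≠ 0 → ξ ∈ E := fun ξ h =>
    Finset.mem_union_left _ (hf.mem_toFinset.2 h)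
  have key : ∀ ξ η, p ξ η ≠ 0 → f ξ ≠ f η → ξ ∈ E ∧ η ∈ E := by
    intro ξ η hpne hfne
    by_cases hfξ : f ξ = 0
    · have hfη : f η ≠ 0 := fun h => hfne (by rw [hfξ, h])
      have hη : η ∈ F := hf.mem_toFinset.2 hfη
      have hpηξ : p η ξ ≠ 0 := by
        intro h
        have h2 := hrev ξ η
        rw [h, mul_zero] at h2
        rcases mul_eq_zero.1 h2 with h' | h'
        · exact absurd h' (ne_of_gt (hσ ξ))
        · exact hpne h'
      refine ⟨Finset.mem_union_right _ ?_, Finset.mem_union_left _ hη⟩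
      exact Finset.mem_biUnion.2 ⟨η, hη, (hrow η).mem_toFinset.2 hpηξ⟩
    · have hξ : ξ ∈ F := hf.mem_toFinset.2 hfξ
      refine ⟨Finset.mem_union_left _ hξ, Finset.mem_union_right _ ?_⟩
      exact Finset.mem_biUnion.2 ⟨ξ, hξ, (hrow ξ).mem_toFinset.2 hpne⟩
  have hz1 : ∀ ξ η, ξ ∉ E ∨ η ∉ E → σ ξ * p ξ η * |f ξ ^ r - f η ^ r| = 0 := by
    intro ξ η h
    by_cases hp0 : p ξ η = 0
    · simp [hp0]
    by_cases hfe : f ξ = f η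
    · simp [hfe]
    · rcases key ξ η hp0 hfe with ⟨h1, h2⟩
      rcases h with h | h
      · exact (h h1).elim
      · exact (h h2).elim
  have hz2 : ∀ ξ η, ξ ∉ E ∨ η ∉ E → σ ξ * p ξ η * |f ξ - f η| ^ r = 0 := by
    intro ξ η h
    by_cases hp0 : p ξ η = 0
    · simp [hp0]
    by_cases hfe : f ξ = f η
    · simp [hfe, Real.zero_rpow hrne]
    · rcases key ξ η hp0 hfe with ⟨h1, h2⟩
      rcases h with h | h
      · exact (h h1).elim
      · exact (h h2).elim
  -- convert tsums to finite sums over E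
  have hc1 : (∑' ξ, ∑' η, σ ξ * p ξ η * |f ξ ^ r - f η ^ r|)
      = ∑ ξ ∈ E, ∑ η ∈ E, σ ξ * p ξ η * |f ξ ^ r - f η ^ r| := by
    have hin : ∀ ξ, (∑' η, σ ξ * p ξ η * |f ξ ^ r - f η ^ r|)
        = ∑ η ∈ E, σ ξ * p ξ η * |f ξ ^ r - f η ^ r| :=
      fun ξ => tsum_eq_sum (fun η hη => hz1 ξ η (Or.inr hη))
    rw [tsum_congr hin]
    exact tsum_eq_sum fun ξ hξ => Finset.sum_eq_zero fun η _ => hz1 ξ η (Or.inl hξ)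
  have hc2 : (∑' ξ, ∑' η, σ ξ * p ξ η * |f ξ - f η| ^ r)
      = ∑ ξ ∈ E, ∑ η ∈ E, σ ξ * p ξ η * |f ξ - f η| ^ r := by
    have hin : ∀ ξ, (∑' η, σ ξ * p ξ η * |f ξ - f η| ^ r)
        = ∑ η ∈ E, σ ξ * p ξ η * |f ξ - f η| ^ r :=
      fun ξ => tsum_eq_sum (fun η hη => hz2 ξ η (Or.inr hη))
    rw [tsum_congr hin]
    exact tsum_eq_sum fun ξ hξ => Finset.sum_eq_zero fun η _ => hz2 ξ η (Or.inl hξ)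
  have hcN : (∑' ξ, σ ξ * f ξ ^ r) = ∑ ξ ∈ E, σ ξ * f ξ ^ r := by
    refine tsum_eq_sum fun ξ hξ => ?_
    have hfξ : f ξ = 0 := by
      by_contra h; exact hξ (hmemF ξ h)
    simp [hfξ, Real.zero_rpow hrne]
  rw [hc1, hc2, hcN]
  set N : ℝ := ∑ ξ ∈ E, σ ξ * f ξ ^ r with hNdef
  have hN0 : 0 ≤ N :=
    Finset.sum_nonneg fun ξ _ => mul_nonneg (hσ ξ).le (Real.rpow_nonneg (hf0 ξ) r)
  set s : Finset (I × I) := E ×ˢ E with hs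
  set W : I × I → ℝ := fun z => σ z.1 * p z.1 z.2 with hW
  have hW0 : ∀ z, 0 ≤ W z := fun z => mul_nonneg (hσ _).le (hp _ _)
  set q : ℝ := r / (r - 1) with hq
  have hconj : Real.HolderConjugate q r := (Real.HolderConjugate.conjExponent hr1).symm
  have hq1 : 1 < q := hconj.lt
  -- row sums bounded by 1
  have hbound : ∀ ξ : I, (∑ η ∈ E, σ ξ * p ξ η * f ξ ^ r) ≤ σ ξ * f ξ ^ r := by
    intro ξ
    have hsummable : Summable (p ξ) :=
      summable_of_ne_finset_zero (s := (hrow ξ).toFinset)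
        (fun b hb => by
          by_contra h
          exact hb ((hrow ξ).mem_toFinset.2 h))
    have hrowsum : (∑ η ∈ E, p ξ η) ≤ 1 := by
      rw [← hstoch ξ]
      exact hsummable.sum_le_tsum E (fun b _ => hp ξ b)
    have hnn : 0 ≤ σ ξ * f ξ ^ r := mul_nonneg (hσ ξ).le (Real.rpow_nonneg (hf0 ξ) r)
    calc (∑ η ∈ E, σ ξ * p ξ η * f ξ ^ r) = (σ ξ * f ξ ^ r) * ∑ η ∈ E, p ξ η := by
          rw [Finset.mul_sum]; exact Finset.sum_congr rfl fun η _ => by ring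
      _ ≤ (σ ξ * f ξ ^ r) * 1 := mul_le_mul_of_nonneg_left hrowsum hnn
      _ = σ ξ * f ξ ^ r := mul_one _
  set G : I × I → ℝ := fun z => W z ^ (1 - 1/r) * (f z.1 ^ (r-1) + f z.2 ^ (r-1)) with hG
  set H : I × I → ℝ := fun z => W z ^ (1/r) * |f z.1 - f z.2| with hH
  have hG0 : ∀ z, 0 ≤ G z := fun z =>
    mul_nonneg (Real.rpow_nonneg (hW0 z) _)
      (add_nonneg (Real.rpow_nonneg (hf0 _) _) (Real.rpow_nonneg (hf0 _) _))
  have hH0 : ∀ z, 0 ≤ H z := fun z =>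
    mul_nonneg (Real.rpow_nonneg (hW0 z) _) (abs_nonneg _)
  -- G^q = W * U^q
  have hGq : ∀ z, G z ^ q = W z * (f z.1 ^ (r-1) + f z.2 ^ (r-1)) ^ q := by
    intro z
    rw [hG]
    rw [Real.mul_rpow (Real.rpow_nonneg (hW0 z) _)
      (add_nonneg (Real.rpow_nonneg (hf0 _) _) (Real.rpow_nonneg (hf0 _) _))]
    congr 1
    rw [← Real.rpow_mul (hW0 z), show (1 - 1/r) * q = 1 by
      rw [hq]; field_simp, Real.rpow_one]
  have hHr : ∀ z, H z ^ r = W z * |f z.1 - f z.2| ^ r := by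
    intro z
    rw [hH, Real.mul_rpow (Real.rpow_nonneg (hW0 z) _) (abs_nonneg _)]
    congr 1
    rw [← Real.rpow_mul (hW0 z), show (1/r) * r = 1 by field_simp, Real.rpow_one]
  -- bound on the q-sum
  have hUq : ∀ z : I × I, (f z.1 ^ (r-1) + f z.2 ^ (r-1)) ^ q ≤ 2 * (f z.1 ^ r + f z.2 ^ r) := by
    intro z
    have h1 := gerl_add_rpow_le (f z.1 ^ (r-1)) (f z.2 ^ (r-1))
      (Real.rpow_nonneg (hf0 _) _) (Real.rpow_nonneg (hf0 _) _) hq1.le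
    have h2 : ∀ ξ : I, (f ξ ^ (r-1)) ^ q = f ξ ^ r := by
      intro ξ
      rw [← Real.rpow_mul (hf0 ξ), show (r-1) * q = r by rw [hq]; field_simp]
    rw [h2, h2] at h1
    have h3 : (2:ℝ) ^ (q - 1) ≤ 2 := by
      calc (2:ℝ) ^ (q - 1) ≤ 2 ^ (1:ℝ) := by
            apply Real.rpow_le_rpow_of_exponent_le one_le_two
            rw [hq]
            rw [div_sub' (ne_of_gt hr1'), div_le_one hr1']
            linarith
        _ = 2 := Real.rpow_one 2
    refine h1.trans ?_
    apply mul_le_mul_of_nonneg_right h3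
    exact add_nonneg (Real.rpow_nonneg (hf0 _) _) (Real.rpow_nonneg (hf0 _) _)
  have hS1 : (∑ z ∈ s, W z * f z.1 ^ r) ≤ N := by
    rw [hs, Finset.sum_product]
    exact Finset.sum_le_sum fun ξ _ => hbound ξ
  have hS2 : (∑ z ∈ s, W z * f z.2 ^ r) ≤ N := by
    calc (∑ z ∈ s, W z * f z.2 ^ r)
        = ∑ ξ ∈ E, ∑ η ∈ E, σ ξ * p ξ η * f η ^ r := by rw [hs, Finset.sum_product]
      _ = ∑ ξ ∈ E, ∑ η ∈ E, σ η * p η ξ * f η ^ r := by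
          exact Finset.sum_congr rfl fun ξ _ => Finset.sum_congr rfl fun η _ => by
            rw [hrev ξ η]
      _ = ∑ η ∈ E, ∑ ξ ∈ E, σ η * p η ξ * f η ^ r := Finset.sum_comm
      _ ≤ ∑ η ∈ E, σ η * f η ^ r := Finset.sum_le_sum fun η _ => hbound η
      _ = N := rfl
  have hmid : (∑ z ∈ s, G z ^ q) ≤ 4 * N := by
    calc (∑ z ∈ s, G z ^ q)
        = ∑ z ∈ s, W z * (f z.1 ^ (r-1) + f z.2 ^ (r-1)) ^ q :=
          Finset.sum_congr rfl fun z _ => hGq z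
      _ ≤ ∑ z ∈ s, W z * (2 * (f z.1 ^ r + f z.2 ^ r)) :=
          Finset.sum_le_sum fun z _ => mul_le_mul_of_nonneg_left (hUq z) (hW0 z)
      _ = 2 * ((∑ z ∈ s, W z * f z.1 ^ r) + ∑ z ∈ s, W z * f z.2 ^ r) := by
          rw [← Finset.sum_add_distrib, Finset.mul_sum]
          exact Finset.sum_congr rfl fun z _ => by ring
      _ ≤ 2 * (N + N) := by
          apply mul_le_mul_of_nonneg_left _ (by norm_num : (0:ℝ) ≤ 2)
          exact add_le_add hS1 hS2
      _ = 4 * N := by ring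
  set D : ℝ := ∑ ξ ∈ E, ∑ η ∈ E, σ ξ * p ξ η * |f ξ - f η| ^ r with hDdef
  have hDprod : D = ∑ z ∈ s, W z * |f z.1 - f z.2| ^ r := by
    rw [hDdef, hs, Finset.sum_product]
  have hD0 : 0 ≤ D := by
    rw [hDprod]
    exact Finset.sum_nonneg fun z _ =>
      mul_nonneg (hW0 z) (Real.rpow_nonneg (abs_nonneg _) _)
  -- Hölder
  have hHolder : (∑ z ∈ s, G z * H z)
      ≤ (∑ z ∈ s, G z ^ q) ^ (1/q) * (∑ z ∈ s, H z ^ r) ^ (1/r) :=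
    Real.inner_le_Lp_mul_Lq_of_nonneg s hconj (fun z _ => hG0 z) (fun z _ => hH0 z)
  have hsumHr : (∑ z ∈ s, H z ^ r) = D := by
    rw [hDprod]
    exact Finset.sum_congr rfl fun z _ => hHr z
  -- main bound on the finite LHS
  have hAbound : (∑ ξ ∈ E, ∑ η ∈ E, σ ξ * p ξ η * |f ξ ^ r - f η ^ r|)
      ≤ r * ((4 * N) ^ (1/q) * D ^ (1/r)) := by
    calc (∑ ξ ∈ E, ∑ η ∈ E, σ ξ * p ξ η * |f ξ ^ r - f η ^ r|)
        = ∑ z ∈ s, W z * |f z.1 ^ r - f z.2 ^ r| := by rw [hs, Finset.sum_product]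
      _ ≤ ∑ z ∈ s, r * (G z * H z) := by
          refine Finset.sum_le_sum fun z _ => ?_
          have hd := gerl_rpow_diff r hr1.le (f z.1) (f z.2) (hf0 _) (hf0 _)
          have hWsplit : W z ^ (1 - 1/r) * W z ^ (1/r) = W z := by
            rw [← Real.rpow_add' (hW0 z) (by norm_num), show (1 - 1/r) + 1/r = 1 by ring,
              Real.rpow_one]
          calc W z * |f z.1 ^ r - f z.2 ^ r|
              ≤ W z * (r * (f z.1 ^ (r-1) + f z.2 ^ (r-1)) * |f z.1 - f z.2|) :=
                mul_le_mul_of_nonneg_left hd (hW0 z)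
            _ = r * (G z * H z) := by
                have hGHz : G z * H z
                    = W z * ((f z.1 ^ (r-1) + f z.2 ^ (r-1)) * |f z.1 - f z.2|) := by
                  calc G z * H z
                      = (W z ^ (1 - 1/r) * W z ^ (1/r))
                          * ((f z.1 ^ (r-1) + f z.2 ^ (r-1)) * |f z.1 - f z.2|) := by
                        simp only [hG, hH]; ring
                    _ = W z * ((f z.1 ^ (r-1) + f z.2 ^ (r-1)) * |f z.1 - f z.2|) := by
                        rw [hWsplit]
                rw [hGHz]; ring
      _ = r * ∑ z ∈ s, G z * H z := (Finset.mul_sum _ _ _).symm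
      _ ≤ r * ((∑ z ∈ s, G z ^ q) ^ (1/q) * (∑ z ∈ s, H z ^ r) ^ (1/r)) :=
          mul_le_mul_of_nonneg_left hHolder hr0.le
      _ ≤ r * ((4 * N) ^ (1/q) * D ^ (1/r)) := by
          rw [hsumHr]
          apply mul_le_mul_of_nonneg_left _ hr0.le
          apply mul_le_mul_of_nonneg_right _ (Real.rpow_nonneg hD0 _)
          apply Real.rpow_le_rpow (Finset.sum_nonneg fun z _ => Real.rpow_nonneg (hG0 z) _)
            hmid (le_of_lt (one_div_pos.2 hconj.pos))
  -- numerics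
  have hqinv : 1/q = (r-1)/r := by rw [hq, one_div_div]
  have h4N : (4 * N) ^ ((r-1)/r) = 4 ^ ((r-1)/r) * N ^ ((r-1)/r) :=
    Real.mul_rpow (by norm_num) hN0
  have hhalfD : ((1:ℝ)/2 * D) ^ (1/r) = ((1:ℝ)/2) ^ (1/r) * D ^ (1/r) :=
    Real.mul_rpow (by norm_num) hD0
  have hc : ((1:ℝ)/2) * 4 ^ ((r-1)/r) ≤ 2 * ((1:ℝ)/2) ^ (1/r) := by
    have h2pos : (0:ℝ) < (2:ℝ) ^ (1/r) := Real.rpow_pos_of_pos two_pos _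
    rw [← mul_le_mul_iff_left₀ h2pos]
    have hhalf : ((1:ℝ)/2) ^ (1/r) * (2:ℝ) ^ (1/r) = 1 := by
      rw [← Real.mul_rpow (by norm_num) (by norm_num)]
      norm_num
    have hrhs : 2 * ((1:ℝ)/2) ^ (1/r) * (2:ℝ) ^ (1/r) = 2 := by
      rw [mul_assoc, hhalf, mul_one]
    rw [hrhs]
    have h42 : (4:ℝ) = (2:ℝ) ^ (2:ℝ) := by
      rw [show (2:ℝ) = ((2:ℕ):ℝ) from by norm_num, Real.rpow_natCast]
      norm_num
    have h4e : (4:ℝ) ^ ((r-1)/r) * (2:ℝ) ^ (1/r) = (2:ℝ) ^ (2 * ((r-1)/r) + 1/r) := by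
      rw [Real.rpow_add two_pos]
      congr 1
      rw [h42, ← Real.rpow_mul (by norm_num : (0:ℝ) ≤ 2)]
    have hexp : 2 * ((r-1)/r) + 1/r ≤ 2 := by
      have heq : 2 * ((r-1)/r) + 1/r = (2*r - 1)/r := by
        field_simp
        ring
      rw [heq, div_le_iff₀ hr0]
      linarith
    have hfin := Real.rpow_le_rpow_of_exponent_le one_le_two hexp
    rw [← h42] at hfin
    rw [mul_assoc, h4e]
    linarith
  rw [hqinv] at hAbound
  calc ((1:ℝ)/2) * (∑ ξ ∈ E, ∑ η ∈ E, σ ξ * p ξ η * |f ξ ^ r - f η ^ r|)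
      ≤ ((1:ℝ)/2) * (r * ((4 * N) ^ ((r-1)/r) * D ^ (1/r))) :=
        mul_le_mul_of_nonneg_left hAbound (by norm_num)
    _ = (((1:ℝ)/2) * 4 ^ ((r-1)/r)) * (r * (N ^ ((r-1)/r) * D ^ (1/r))) := by
        rw [h4N]; ring
    _ ≤ (2 * ((1:ℝ)/2) ^ (1/r)) * (r * (N ^ ((r-1)/r) * D ^ (1/r))) := by
        apply mul_le_mul_of_nonneg_right hc
        exact mul_nonneg hr0.le
          (mul_nonneg (Real.rpow_nonneg hN0 _) (Real.rpow_nonneg hD0 _))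
    _ = 2 * r * N ^ ((r-1)/r) * (((1:ℝ)/2 * D) ^ (1/r)) := by
        rw [hhalfD]; ring
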